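/- With the power structure of the previous construction, one has (A(t)·B(t))^m = A(t)^m · B(t)^m for all series A(t), B(t) ∈ 1 + t·R[[t]] and all m ∈ R. -/

import Mathlib

/-- Substitution `t ↦ t^k` in a formal power series. -/
noncomputable def substPow {R : Type*} [CommRing R] (k : ℕ) (A : PowerSeries R) :
    PowerSeries R :=
  PowerSeries.mk fun n => if k ∣ n then PowerSeries.coeff (R := R) (n / k) A else 0

/-- The infinite product `∏_{i ≥ 1} f i`, well defined (coefficientwise) whenever
`f i ≡ 1 mod t^i`. -/
noncomputable def infProd {R : Type*} [CommRing R] (f : ℕ → PowerSeries R) : PowerSeries R :=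
  PowerSeries.mk fun n => PowerSeries.coeff (R := R) n (∏ i ∈ Finset.Icc 1 n, f i)

/-- The power structure: given the family `E a = (1-t)^{-a}` and the exponents `a i` of the
unique decomposition `A(t) = ∏_{i≥1} (1-t^i)^{-a_i}`, the series
`A(t)^m := ∏_{i≥1} (1-t^i)^{-a_i m}`. -/
noncomputable def psPow {R : Type*} [CommRing R] (E : R → PowerSeries R) (a : ℕ → R)
    (m : R) : PowerSeries R :=
  infProd fun i => substPow i (E (a i * m))

section Aux
open Finset PowerSeries
variable {R : Type*} [CommRing R]

lemma coeff_substPow (k n : ℕ) (A : PowerSeries R) :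
    PowerSeries.coeff (R := R) n (substPow k A) =
      if k ∣ n then PowerSeries.coeff (R := R) (n / k) A else 0 := by
  simp [substPow]

lemma coeff_infProd (f : ℕ → PowerSeries R) (n : ℕ) :
    PowerSeries.coeff (R := R) n (infProd f) =
      PowerSeries.coeff (R := R) n (∏ i ∈ Finset.Icc 1 n, f i) := by
  simp [infProd]

/-- `f j ≡ 1 mod t^j` condition. -/
def GoodFam (f : ℕ → PowerSeries R) : Prop :=
  (∀ j, PowerSeries.constantCoeff (R := R) (f j) = 1) ∧
  ∀ j n, 0 < n → n < j → PowerSeries.coeff (R := R) n (f j) = 0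

lemma goodFam_subst (E : R → PowerSeries R)
    (hE0 : ∀ a, PowerSeries.constantCoeff (R := R) (E a) = 1) (x : ℕ → R) :
    GoodFam fun i => substPow i (E (x i)) := by
  constructor
  · intro j
    have : PowerSeries.constantCoeff (R := R) (substPow j (E (x j)))
        = PowerSeries.coeff (R := R) 0 (substPow j (E (x j))) := by simp
    rw [this, coeff_substPow]
    simp [hE0]
  · intro j n hn hnj
    rw [coeff_substPow, if_neg (Nat.not_dvd_of_pos_of_lt hn hnj)]

lemma coeff_prod_stable {f : ℕ → PowerSeries R} (hf : GoodFam f) {n N : ℕ} (hnN : n ≤ N) :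
    PowerSeries.coeff (R := R) n (∏ i ∈ Finset.Icc 1 N, f i) =
      PowerSeries.coeff (R := R) n (∏ i ∈ Finset.Icc 1 n, f i) := by
  induction N, hnN using Nat.le_induction with
  | base => rfl
  | succ N hN ih =>
    rw [Finset.prod_Icc_succ_top (Nat.succ_le_succ (Nat.zero_le N)), PowerSeries.coeff_mul]
    rw [Finset.sum_eq_single (n, 0)]
    · dsimp only
      rw [PowerSeries.coeff_zero_eq_constantCoeff, hf.1, mul_one]
      exact ih
    · rintro ⟨p, q⟩ hpq hne
      have hsum : p + q = n := Finset.HasAntidiagonal.mem_antidiagonal.mp hpq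
      have hq : 0 < q := by
        rcases Nat.eq_zero_or_pos q with h | h
        · exact absurd (by simp only [Prod.mk.injEq]; omega) hne
        · exact h
      have : q < N + 1 := by omega
      rw [hf.2 (N+1) q hq this, mul_zero]
    · intro h
      exact absurd (Finset.HasAntidiagonal.mem_antidiagonal.mpr (by omega)) h

lemma coeff_infProd_eq {f : ℕ → PowerSeries R} (hf : GoodFam f) {n N : ℕ} (hnN : n ≤ N) :
    PowerSeries.coeff (R := R) n (infProd f) =
      PowerSeries.coeff (R := R) n (∏ i ∈ Finset.Icc 1 N, f i) := by
  rw [coeff_infProd, coeff_prod_stable hf hnN]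

lemma infProd_mul {f g : ℕ → PowerSeries R} (hf : GoodFam f) (hg : GoodFam g) :
    infProd (fun i => f i * g i) = infProd f * infProd g := by
  apply PowerSeries.ext
  intro n
  rw [coeff_infProd, Finset.prod_mul_distrib, PowerSeries.coeff_mul, PowerSeries.coeff_mul]
  apply Finset.sum_congr rfl
  rintro ⟨p, q⟩ hpq
  have hsum : p + q = n := Finset.HasAntidiagonal.mem_antidiagonal.mp hpq
  rw [coeff_infProd_eq hf (by omega : p ≤ n), coeff_infProd_eq hg (by omega : q ≤ n)]

lemma infProd_congr {f g : ℕ → PowerSeries R} (h : ∀ i, 1 ≤ i → f i = g i) :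
    infProd f = infProd g := by
  apply PowerSeries.ext
  intro n
  rw [coeff_infProd, coeff_infProd]
  congr 1
  exact Finset.prod_congr rfl fun i hi => h i (Finset.mem_Icc.mp hi).1

lemma substPow_mul {k : ℕ} (hk : 0 < k) (X Y : PowerSeries R) :
    substPow k (X * Y) = substPow k X * substPow k Y := by
  apply PowerSeries.ext
  intro n
  rw [coeff_substPow, PowerSeries.coeff_mul]
  by_cases hdvd : k ∣ n
  · obtain ⟨m, rfl⟩ := hdvd
    rw [if_pos ⟨m, rfl⟩, Nat.mul_div_cancel_left m hk, PowerSeries.coeff_mul]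
    have hinj : Set.InjOn (fun uv : ℕ × ℕ => (k * uv.1, k * uv.2))
        (Finset.HasAntidiagonal.antidiagonal m) := by
      intro x _ y _ hxy
      simp only [Prod.mk.injEq] at hxy
      exact Prod.ext (Nat.eq_of_mul_eq_mul_left hk hxy.1) (Nat.eq_of_mul_eq_mul_left hk hxy.2)
    have hsub : (Finset.HasAntidiagonal.antidiagonal m).image (fun uv : ℕ × ℕ => (k * uv.1, k * uv.2)) ⊆
        Finset.HasAntidiagonal.antidiagonal (k * m) := by
      intro pq hpq
      simp only [Finset.mem_image, Finset.HasAntidiagonal.mem_antidiagonal] at hpq ⊢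
      obtain ⟨⟨u, v⟩, huv, rfl⟩ := hpq
      simp only [Finset.HasAntidiagonal.mem_antidiagonal] at huv ⊢
      rw [← Nat.mul_add, huv]
    have hzero : ∀ pq ∈ Finset.HasAntidiagonal.antidiagonal (k * m),
        pq ∉ (Finset.HasAntidiagonal.antidiagonal m).image (fun uv : ℕ × ℕ => (k * uv.1, k * uv.2)) →
        PowerSeries.coeff (R := R) pq.1 (substPow k X) * PowerSeries.coeff (R := R) pq.2 (substPow k Y) = 0 := by
      rintro ⟨p, q⟩ hpq hnot
      simp only [Finset.HasAntidiagonal.mem_antidiagonal] at hpq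
      rw [coeff_substPow, coeff_substPow]
      by_cases hp : k ∣ p
      · by_cases hq : k ∣ q
        · exfalso
          obtain ⟨u, rfl⟩ := hp
          obtain ⟨v, rfl⟩ := hq
          apply hnot
          simp only [Finset.mem_image, Finset.HasAntidiagonal.mem_antidiagonal]
          refine ⟨(u, v), ?_, rfl⟩
          have : k * (u + v) = k * m := by rw [Nat.mul_add]; exact hpq
          exact Nat.eq_of_mul_eq_mul_left hk this
        · rw [if_neg hq, mul_zero]
      · rw [if_neg hp, zero_mul]
    calc ∑ uv ∈ Finset.HasAntidiagonal.antidiagonal m, PowerSeries.coeff (R := R) uv.1 X * PowerSeries.coeff (R := R) uv.2 Y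
        = ∑ uv ∈ Finset.HasAntidiagonal.antidiagonal m,
            PowerSeries.coeff (R := R) (k * uv.1) (substPow k X) *
            PowerSeries.coeff (R := R) (k * uv.2) (substPow k Y) := by
          apply Finset.sum_congr rfl
          rintro ⟨u, v⟩ huv
          rw [coeff_substPow, coeff_substPow, if_pos ⟨u, rfl⟩, if_pos ⟨v, rfl⟩,
            Nat.mul_div_cancel_left u hk, Nat.mul_div_cancel_left v hk]
      _ = ∑ pq ∈ (Finset.HasAntidiagonal.antidiagonal m).image (fun uv : ℕ × ℕ => (k * uv.1, k * uv.2)),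
            PowerSeries.coeff (R := R) pq.1 (substPow k X) *
            PowerSeries.coeff (R := R) pq.2 (substPow k Y) := by
          rw [Finset.sum_image fun x hx y hy h => hinj hx hy h]
      _ = ∑ pq ∈ Finset.HasAntidiagonal.antidiagonal (k * m),
            PowerSeries.coeff (R := R) pq.1 (substPow k X) *
            PowerSeries.coeff (R := R) pq.2 (substPow k Y) := Finset.sum_subset hsub hzero
  · rw [if_neg hdvd, PowerSeries.coeff_mul]
    symm
    apply Finset.sum_eq_zero
    rintro ⟨p, q⟩ hpq
    have hsum : p + q = n := Finset.HasAntidiagonal.mem_antidiagonal.mp hpq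
    rw [coeff_substPow, coeff_substPow]
    by_cases hp : k ∣ p
    · by_cases hq : k ∣ q
      · exact absurd (hsum ▸ Nat.dvd_add hp hq) hdvd
      · rw [if_neg hq, mul_zero]
    · rw [if_neg hp, zero_mul]

lemma coeff_key (E : R → PowerSeries R)
    (hE0 : ∀ a, PowerSeries.constantCoeff (R := R) (E a) = 1)
    (hE1 : ∀ a, PowerSeries.coeff (R := R) 1 (E a) = a)
    (x : ℕ → R) {n : ℕ} (hn : 0 < n) :
    PowerSeries.coeff (R := R) n (infProd fun i => substPow i (E (x i))) =
      PowerSeries.coeff (R := R) n (∏ i ∈ Finset.Icc 1 (n - 1), substPow i (E (x i))) + x n := by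
  obtain ⟨N, rfl⟩ : ∃ N, n = N + 1 := ⟨n - 1, by omega⟩
  simp only [Nat.add_sub_cancel]
  rw [coeff_infProd, Finset.prod_Icc_succ_top (Nat.succ_le_succ (Nat.zero_le N)),
    PowerSeries.coeff_mul]
  have h1 : PowerSeries.coeff (R := R) 0 (substPow (N + 1) (E (x (N + 1)))) = 1 := by
    rw [coeff_substPow]; simp [hE0]
  have h2 : PowerSeries.coeff (R := R) (N + 1) (substPow (N + 1) (E (x (N + 1)))) = x (N + 1) := by
    rw [coeff_substPow, if_pos dvd_rfl, Nat.div_self (Nat.succ_pos N), hE1]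
  have h3 : PowerSeries.coeff (R := R) 0 (∏ i ∈ Finset.Icc 1 N, substPow i (E (x i))) = 1 := by
    rw [PowerSeries.coeff_zero_eq_constantCoeff, map_prod]
    exact Finset.prod_eq_one fun i _ => (goodFam_subst E hE0 x).1 i
  rw [← Finset.sum_subset (s₁ := {((N + 1 : ℕ), (0 : ℕ)), ((0 : ℕ), (N + 1 : ℕ))})
    (by
      intro pq hpq
      simp only [Finset.mem_insert, Finset.mem_singleton] at hpq
      rcases hpq with rfl | rfl <;> simp [Finset.HasAntidiagonal.mem_antidiagonal])
    (by
      rintro ⟨p, q⟩ hpq hnot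
      simp only [Finset.mem_insert, Finset.mem_singleton, Prod.mk.injEq, not_or] at hnot
      have hsum : p + q = N + 1 := Finset.HasAntidiagonal.mem_antidiagonal.mp hpq
      have hq0 : 0 < q := by omega
      rw [(goodFam_subst E hE0 x).2 _ q hq0 (by omega), mul_zero])]
  rw [Finset.sum_pair (by simp only [Ne, Prod.mk.injEq]; omega)]
  dsimp only
  rw [h1, h2, h3, mul_one, one_mul]

lemma decomp_unique (E : R → PowerSeries R)
    (hE0 : ∀ a, PowerSeries.constantCoeff (R := R) (E a) = 1)
    (hE1 : ∀ a, PowerSeries.coeff (R := R) 1 (E a) = a)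
    (c d : ℕ → R)
    (h : (infProd fun i => substPow i (E (c i))) = infProd fun i => substPow i (E (d i))) :
    ∀ n, 0 < n → c n = d n := by
  intro n
  induction n using Nat.strong_induction_on with
  | _ n ih =>
    intro hn
    have hc := coeff_key E hE0 hE1 c hn
    have hd := coeff_key E hE0 hE1 d hn
    have hprod : (∏ i ∈ Finset.Icc 1 (n - 1), substPow i (E (c i)))
        = ∏ i ∈ Finset.Icc 1 (n - 1), substPow i (E (d i)) := by
      apply Finset.prod_congr rfl
      intro i hi
      obtain ⟨h1, h2⟩ := Finset.mem_Icc.mp hi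
      rw [ih i (by omega) (by omega)]
    have heq : PowerSeries.coeff (R := R) n (infProd fun i => substPow i (E (c i)))
        = PowerSeries.coeff (R := R) n (infProd fun i => substPow i (E (d i))) := by rw [h]
    rw [hc, hd, hprod] at heq
    exact add_left_cancel heq

end Aux

/-- With the power structure defined via the unique infinite-product decompositions,
`(A(t)·B(t))^m = A(t)^m · B(t)^m`: here `a`, `b`, `c` are the decomposition exponents of
`A`, `B` and `A·B` respectively. -/
theorem stmt2 {R : Type*} [CommRing R] (E : R → PowerSeries R)
    (hE0 : ∀ a, PowerSeries.constantCoeff (R := R) (E a) = 1)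
    (hEadd : ∀ a b, E (a + b) = E a * E b)
    (hE1 : ∀ a, PowerSeries.coeff (R := R) 1 (E a) = a)
    (hEone : E 1 = PowerSeries.mk fun _ => (1 : R))
    (A B : PowerSeries R) (a b c : ℕ → R)
    (hA : A = infProd fun i => substPow i (E (a i)))
    (hB : B = infProd fun i => substPow i (E (b i)))
    (hAB : A * B = infProd fun i => substPow i (E (c i))) :
    ∀ m : R, psPow E c m = psPow E a m * psPow E b m := by
  have key : ∀ n, 0 < n → c n = a n + b n := by
    apply decomp_unique E hE0 hE1
    rw [← hAB, hA, hB, ← infProd_mul (goodFam_subst E hE0 a) (goodFam_subst E hE0 b)]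
    apply infProd_congr
    intro i hi
    rw [hEadd, substPow_mul hi]
  intro m
  unfold psPow
  rw [← infProd_mul (goodFam_subst E hE0 fun i => a i * m)
      (goodFam_subst E hE0 fun i => b i * m)]
  apply infProd_congr
  intro i hi
  rw [key i hi, add_mul, hEadd, substPow_mul hi]
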